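/- Let F be a number field with a ring automorphism ρ, ρ ≠ id, satisfying σ ∘ ρ = conj ∘ σ for every ring homomorphism σ : F → ℂ, and let Φ be a CM-type of F. Then there exists ζ ∈ F such that ρ(ζ) = −ζ and for every σ ∈ Φ the complex number σ(ζ) has real part 0 and strictly positive imaginary part. -/

import Mathlib

/-- A field is totally real if every ring homomorphism to `ℂ` has image in `ℝ`. -/
def IsTotallyRealField (F : Type*) [Field F] : Prop :=
  ∀ σ : F →+* ℂ, ∀ x : F, ∃ r : ℝ, σ x = (r : ℂ)

/-- A field is totally imaginary if it admits no real embedding. -/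
def IsTotallyImaginary (F : Type*) [Field F] : Prop :=
  IsEmpty (F →+* ℝ)

/-- A number field is a CM-field if it is totally imaginary and is a quadratic
extension of a totally real subfield. -/
def IsCMField (F : Type*) [Field F] : Prop :=
  IsTotallyImaginary F ∧
    ∃ K : Subfield F, IsTotallyRealField K ∧ Module.finrank K F = 2

/-- A CM-type on `F`: a set of embeddings `F → ℂ` containing exactly one of each
conjugate pair. -/
def IsCMType (F : Type*) [Field F] (Φ : Set (F →+* ℂ)) : Prop :=
  ∀ σ : F →+* ℂ, Xor' (σ ∈ Φ) (σ ∈ (fun τ : F →+* ℂ => (starRingEnd ℂ).comp τ) '' Φ)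


/-- Escape lemma: a `ℚ`-vector space is not covered by the kernels of finitely
many nonzero linear maps. -/
lemma aux_escape {ι V W : Type*} [AddCommGroup V] [Module ℚ V]
    [AddCommGroup W] [Module ℚ W] (s : Finset ι) (f : ι → V →ₗ[ℚ] W)
    (hf : ∀ i ∈ s, f i ≠ 0) : ∃ v : V, ∀ i ∈ s, f i v ≠ 0 := by
  classical
  induction s using Finset.induction_on with
  | empty => exact ⟨0, by simp⟩
  | insert _ _ ha ih =>
    rename_i a s
    obtain ⟨v, hv⟩ := ih fun i hi => hf i (Finset.mem_insert_of_mem hi)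
    obtain ⟨w, hw⟩ : ∃ w, f a w ≠ 0 := by
      by_contra h
      push_neg at h
      exact hf a (Finset.mem_insert_self a s) (LinearMap.ext h)
    set bad : ι → Set ℚ := fun i => {q : ℚ | f i (v + q • w) = 0} with hbad
    have hfin : ∀ i ∈ insert a s, (bad i).Finite := by
      intro i hi
      by_cases h0 : f i w = 0
      · rcases Finset.mem_insert.mp hi with rfl | hi'
        · exact absurd h0 hw
        · have : bad i = ∅ := by
            ext q
            simp only [hbad, Set.mem_setOf_eq, Set.mem_empty_iff_false, iff_false]
            rw [map_add, map_smul, h0, smul_zero, add_zero]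
            exact hv i hi'
          rw [this]; exact Set.finite_empty
      · apply Set.Subsingleton.finite
        intro q1 hq1 q2 hq2
        simp only [hbad, Set.mem_setOf_eq, map_add, map_smul] at hq1 hq2
        have h12 : q1 • f i w = q2 • f i w :=
          (eq_neg_of_add_eq_zero_right hq1).trans (eq_neg_of_add_eq_zero_right hq2).symm
        have hsub : (q1 - q2) • f i w = 0 := by rw [sub_smul, h12, sub_self]
        rcases smul_eq_zero.mp hsub with h | h
        · exact sub_eq_zero.mp h
        · exact absurd h h0
    have htot : (⋃ i ∈ (insert a s : Finset ι), bad i).Finite :=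
      Set.Finite.biUnion (insert a s).finite_toSet hfin
    obtain ⟨q, hq⟩ := htot.infinite_compl.nonempty
    refine ⟨v + q • w, fun i hi h0 => hq ?_⟩
    exact Set.mem_biUnion hi h0

lemma aux_sign {a b : ℝ} (hb : b ≠ 0) (h : |a - b| < |b|) : 0 < a * b := by
  rcases lt_or_gt_of_ne hb with h1 | h1
  · rw [abs_of_neg h1] at h
    have h2 := abs_lt.mp h
    nlinarith
  · rw [abs_of_pos h1] at h
    have h2 := abs_lt.mp h
    nlinarith

/-- Rational polynomial with prescribed signs at finitely many real points. -/
lemma aux_poly {ι : Type*} (s : Finset ι) (u t : ι → ℝ) (ht : ∀ i ∈ s, t i ≠ 0)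
    (hcomp : ∀ i ∈ s, ∀ j ∈ s, u i = u j → t i = t j) :
    ∃ (n : ℕ) (c : ℕ → ℚ), ∀ i ∈ s,
      0 < (∑ k ∈ Finset.range n, (c k : ℝ) * u i ^ k) * t i := by
  classical
  rcases s.eq_empty_or_nonempty with rfl | hs
  · exact ⟨0, 0, by simp⟩
  set S : Finset ℝ := s.image u with hS
  have hTex : ∀ x ∈ S, ∃ i, i ∈ s ∧ u i = x := by
    intro x hx
    rw [hS, Finset.mem_image] at hx
    obtain ⟨i, hi, hix⟩ := hx
    exact ⟨i, hi, hix⟩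
  choose g hg1 hg2 using hTex
  set T : ℝ → ℝ := fun x => if h : x ∈ S then t (g x h) else 0 with hT
  have hTu : ∀ i ∈ s, T (u i) = t i := by
    intro i hi
    have hx : u i ∈ S := Finset.mem_image_of_mem u hi
    simp only [hT, dif_pos hx]
    exact hcomp _ (hg1 _ hx) _ hi (hg2 _ hx)
  set p : Polynomial ℝ := Lagrange.interpolate S id T with hp
  have hpeval : ∀ i ∈ s, p.eval (u i) = t i := by
    intro i hi
    have hx : u i ∈ S := Finset.mem_image_of_mem u hi
    have h := Lagrange.eval_interpolate_at_node T (Set.injOn_id _) hx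
    simpa [hp] using h.trans (hTu i hi)
  set n : ℕ := p.natDegree + 1 with hn
  set ε : ℝ := (s.image fun i => |t i|).min' (hs.image _) with hε
  have hεpos : 0 < ε := by
    have hm := (s.image fun i => |t i|).min'_mem (hs.image _)
    rw [Finset.mem_image] at hm
    obtain ⟨i, hi, hie⟩ := hm
    rw [hε, ← hie]
    exact abs_pos.mpr (ht i hi)
  have hεle : ∀ i ∈ s, ε ≤ |t i| := fun i hi =>
    Finset.min'_le _ _ (Finset.mem_image_of_mem _ hi)
  set D : ℝ :=
    (s.image fun i => ∑ k ∈ Finset.range n, |u i| ^ k).max' (hs.image _) + 1 with hD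
  have hDle : ∀ i ∈ s, ∑ k ∈ Finset.range n, |u i| ^ k ≤ D - 1 := by
    intro i hi
    have h := Finset.le_max' _ _
      (Finset.mem_image_of_mem (fun i => ∑ k ∈ Finset.range n, |u i| ^ k) hi)
    rw [hD]; linarith
  have hDpos : 0 < D := by
    obtain ⟨i, hi⟩ := hs
    have h0 : (0:ℝ) ≤ ∑ k ∈ Finset.range n, |u i| ^ k :=
      Finset.sum_nonneg fun k _ => pow_nonneg (abs_nonneg _) _
    have := hDle i hi
    linarith
  set δ : ℝ := ε / D with hδ
  have hδpos : 0 < δ := div_pos hεpos hDpos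
  choose c hcc using fun k : ℕ => exists_rat_near (p.coeff k) hδpos
  refine ⟨n, c, fun i hi => ?_⟩
  have heval : p.eval (u i) = ∑ k ∈ Finset.range n, p.coeff k * u i ^ k := by
    rw [hn]; exact Polynomial.eval_eq_sum_range _
  have key : |(∑ k ∈ Finset.range n, (c k : ℝ) * u i ^ k) - p.eval (u i)| < |t i| := by
    rw [heval, ← Finset.sum_sub_distrib]
    calc |∑ k ∈ Finset.range n, ((c k : ℝ) * u i ^ k - p.coeff k * u i ^ k)|
        ≤ ∑ k ∈ Finset.range n, |(c k : ℝ) * u i ^ k - p.coeff k * u i ^ k| :=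
          Finset.abs_sum_le_sum_abs _ _
      _ = ∑ k ∈ Finset.range n, |(c k : ℝ) - p.coeff k| * |u i| ^ k := by
          refine Finset.sum_congr rfl fun k _ => ?_
          rw [← sub_mul, abs_mul, abs_pow]
      _ ≤ ∑ k ∈ Finset.range n, δ * |u i| ^ k := by
          refine Finset.sum_le_sum fun k _ => ?_
          have h1 : |(c k : ℝ) - p.coeff k| ≤ δ := by
            rw [abs_sub_comm]; exact le_of_lt (hcc k)
          exact mul_le_mul_of_nonneg_right h1 (pow_nonneg (abs_nonneg _) _)
      _ = δ * ∑ k ∈ Finset.range n, |u i| ^ k := (Finset.mul_sum _ _ _).symm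
      _ ≤ δ * (D - 1) := mul_le_mul_of_nonneg_left (hDle i hi) hδpos.le
      _ < δ * D := by nlinarith
      _ = ε := by rw [hδ]; exact div_mul_cancel₀ ε hDpos.ne'
      _ ≤ |t i| := hεle i hi
  rw [hpeval i hi] at key
  exact aux_sign (ht i hi) key

/-- The auxiliary `ℚ`-linear functional `x ↦ σ(x - ρ x) + τ(x - ρ x)`. -/
noncomputable def pairFun {F : Type*} [Field F] [CharZero F] (ρ : F ≃+* F)
    (σ τ : F →+* ℂ) : F →ₗ[ℚ] ℂ where
  toFun x := σ (x - ρ x) + τ (x - ρ x)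
  map_add' a b := by
    simp only [map_add, map_sub]
    ring
  map_smul' q x := by
    simp only [RingHom.id_apply, Rat.smul_def, map_sub, map_mul, map_ratCast]
    ring

/-- Existence of a totally imaginary element `ζ` adapted to a CM-type: `ρ(ζ) = -ζ` and
`σ(ζ)` is purely imaginary with positive imaginary part for all `σ` in the CM-type. -/
theorem exists_totally_imaginary_element
    (F : Type*) [Field F] [NumberField F] (ρ : F ≃+* F)
    (hρ : ρ ≠ RingEquiv.refl F)
    (hconj : ∀ σ : F →+* ℂ, ∀ x : F, σ (ρ x) = (starRingEnd ℂ) (σ x))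
    (Φ : Set (F →+* ℂ)) (hΦ : IsCMType F Φ) :
    ∃ ζ : F, ρ ζ = -ζ ∧ ∀ σ ∈ Φ, (σ ζ).re = 0 ∧ 0 < (σ ζ).im := by
  classical
  obtain ⟨σ0⟩ : Nonempty (F →+* ℂ) := inferInstance
  -- ρ is an involution
  have hρ2 : ∀ x, ρ (ρ x) = x := by
    intro x
    have h1 := hconj σ0 (ρ x)
    rw [hconj σ0 x, Complex.conj_conj] at h1
    exact σ0.injective h1
  -- an element moved by ρ
  obtain ⟨η, hη⟩ : ∃ η, ρ η ≠ η := by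
    by_contra h
    push_neg at h
    exact hρ (RingEquiv.ext fun x => (h x).trans rfl)
  have hξ0 : ρ (η - ρ η) = -(η - ρ η) := by rw [map_sub, hρ2]; ring
  have hξ0ne : η - ρ η ≠ 0 := sub_ne_zero.mpr (Ne.symm hη)
  -- the pair functionals are nonzero
  have hΦfin := Φ.toFinite
  have hnz : ∀ pr ∈ (hΦfin.toFinset ×ˢ hΦfin.toFinset),
      pairFun ρ pr.1 pr.2 ≠ 0 := by
    rintro ⟨σ, τ⟩ hpr hzero
    rw [Finset.mem_product, Set.Finite.mem_toFinset, Set.Finite.mem_toFinset] at hpr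
    obtain ⟨hσΦ, hτΦ⟩ := hpr
    have hzero' : ∀ x : F, σ (x - ρ x) + τ (x - ρ x) = 0 := by
      intro x
      have h := LinearMap.congr_fun hzero x
      simpa [pairFun] using h
    -- σ and conj ∘ τ agree on the -1 eigenspace
    have hagree : ∀ v : F, ρ v = -v → σ v = (starRingEnd ℂ) (τ v) := by
      intro v hv
      have h2 : (2:F)⁻¹ * v - ρ ((2:F)⁻¹ * v) = v := by
        rw [map_mul, hv, map_inv₀, map_ofNat]
        ring
      have h3 := hzero' ((2:F)⁻¹ * v)
      rw [h2] at h3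
      have h4 : τ (ρ v) = (starRingEnd ℂ) (τ v) := hconj τ v
      rw [hv, map_neg] at h4
      rw [← h4]
      linear_combination h3
    -- hence they agree everywhere
    have heq : ∀ x : F, σ x = (starRingEnd ℂ) (τ x) := by
      intro x
      obtain ⟨a, hadef⟩ : ∃ a : F, a = x + ρ x := ⟨_, rfl⟩
      have ha : ρ a = a := by rw [hadef, map_add, hρ2, add_comm]
      have haξ : ρ (a * (η - ρ η)) = -(a * (η - ρ η)) := by
        rw [map_mul, ha, hξ0, mul_neg]
      have h5 := hagree _ haξ
      have h6 := hagree _ hξ0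
      simp only [map_mul] at h5
      have h7 : σ (η - ρ η) ≠ 0 := fun h => hξ0ne (σ.injective (by rw [h, map_zero]))
      have h8 : σ a = (starRingEnd ℂ) (τ a) := by
        rw [h6] at h5
        exact mul_right_cancel₀ (by rw [← h6]; exact h7) h5
      have h9 : σ (x - ρ x) = (starRingEnd ℂ) (τ (x - ρ x)) := by
        apply hagree
        rw [map_sub, hρ2]; ring
      have h10 : a + (x - ρ x) = 2 * x := by rw [hadef]; ring
      have h11 : σ (2 * x) = (starRingEnd ℂ) (τ (2 * x)) := by
        have e1 : σ (2 * x) = σ a + σ (x - ρ x) := by rw [← h10, map_add]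
        have e2 : τ (2 * x) = τ a + τ (x - ρ x) := by rw [← h10, map_add]
        rw [e1, e2, map_add, h8, h9]
      simp only [map_mul, map_ofNat] at h11
      exact mul_left_cancel₀ two_ne_zero h11
    have himg : σ ∈ (fun τ : F →+* ℂ => (starRingEnd ℂ).comp τ) '' Φ :=
      ⟨τ, hτΦ, by ext x; exact (heq x).symm⟩
    rcases hΦ σ with ⟨_, hnB⟩ | ⟨_, hnA⟩
    · exact hnB himg
    · exact hnA hσΦ
  -- choose ξ with all σ ξ + τ ξ ≠ 0
  obtain ⟨x0, hx0⟩ := aux_escape _ (fun pr : (F →+* ℂ) × (F →+* ℂ) => pairFun ρ pr.1 pr.2) hnz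
  set ξ : F := x0 - ρ x0 with hξdef
  have hξ : ρ ξ = -ξ := by rw [hξdef, map_sub, hρ2]; ring
  have hpair : ∀ σ ∈ Φ, ∀ τ ∈ Φ, σ ξ + τ ξ ≠ 0 := by
    intro σ hσ τ hτ
    have := hx0 (σ, τ) (Finset.mem_product.mpr
      ⟨Set.Finite.mem_toFinset _ |>.mpr hσ, Set.Finite.mem_toFinset _ |>.mpr hτ⟩)
    exact this
  -- every σ ξ is purely imaginary
  have hre : ∀ σ : F →+* ℂ, (σ ξ).re = 0 := by
    intro σ
    have h1 : (starRingEnd ℂ) (σ ξ) = -(σ ξ) := by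
      rw [← hconj σ ξ, hξ, map_neg]
    have h2 := congrArg Complex.re h1
    simp only [Complex.conj_re, Complex.neg_re] at h2
    linarith
  set t : (F →+* ℂ) → ℝ := fun σ => (σ ξ).im with htdef
  have ht0 : ∀ σ ∈ hΦfin.toFinset, t σ ≠ 0 := by
    intro σ hσ h0
    have hσΦ := (Set.Finite.mem_toFinset _).mp hσ
    apply hpair σ hσΦ σ hσΦ
    have : σ ξ = 0 := Complex.ext (hre σ) h0
    rw [this, add_zero]
  have hsum : ∀ σ ∈ Φ, ∀ τ ∈ Φ, t σ + t τ ≠ 0 := by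
    intro σ hσ τ hτ h0
    apply hpair σ hσ τ hτ
    apply Complex.ext
    · simp [Complex.add_re, hre]
    · simpa [Complex.add_im] using h0
  have hcomp : ∀ σ ∈ hΦfin.toFinset, ∀ τ ∈ hΦfin.toFinset,
      (fun σ => -(t σ)^2) σ = (fun σ => -(t σ)^2) τ → t σ = t τ := by
    intro σ hσ τ hτ h0
    have hσΦ := (Set.Finite.mem_toFinset _).mp hσ
    have hτΦ := (Set.Finite.mem_toFinset _).mp hτ
    simp only [neg_inj] at h0
    rcases sq_eq_sq_iff_eq_or_eq_neg.mp h0 with h | h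
    · exact h
    · exact absurd (by rw [h]; ring) (hsum σ hσΦ τ hτΦ)
  obtain ⟨n, c, hc⟩ := aux_poly hΦfin.toFinset (fun σ => -(t σ)^2) t ht0 hcomp
  refine ⟨∑ k ∈ Finset.range n, ((c k : ℚ) : F) * ((ξ * ξ) ^ k * ξ), ?_, ?_⟩
  · rw [map_sum]
    rw [← Finset.sum_neg_distrib]
    refine Finset.sum_congr rfl fun k _ => ?_
    rw [map_mul, map_mul, map_pow, map_mul, map_ratCast, hξ]
    ring
  · intro σ hσΦ
    have hσ : σ ∈ hΦfin.toFinset := (Set.Finite.mem_toFinset _).mpr hσΦ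
    have hσξ : σ ξ = ((t σ : ℝ) : ℂ) * Complex.I := by
      apply Complex.ext <;> simp [hre σ, htdef]
    have hσξξ : σ (ξ * ξ) = ((-(t σ)^2 : ℝ) : ℂ) := by
      rw [map_mul, hσξ]
      push_cast
      rw [mul_mul_mul_comm, Complex.I_mul_I]
      ring
    have hval : σ (∑ k ∈ Finset.range n, ((c k : ℚ) : F) * ((ξ * ξ) ^ k * ξ))
        = (((∑ k ∈ Finset.range n, (c k : ℝ) * (-(t σ)^2) ^ k) * t σ : ℝ) : ℂ) * Complex.I := by
      rw [map_sum]
      push_cast [Finset.sum_mul]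
      refine Finset.sum_congr rfl fun k _ => ?_
      rw [map_mul, map_mul, map_pow, map_ratCast, hσξξ, hσξ]
      push_cast
      ring
    rw [hval]
    constructor
    · simp only [Complex.mul_re, Complex.ofReal_re, Complex.ofReal_im, Complex.I_re,
        Complex.I_im, mul_zero, zero_mul, mul_one, sub_zero, zero_sub, neg_zero]
    · simp only [Complex.mul_im, Complex.ofReal_re, Complex.ofReal_im, Complex.I_re,
        Complex.I_im, mul_one, zero_mul, add_zero]
      exact hc σ hσ
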